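/- Let f : (0,∞) → ℝ be measurable and bounded (f ∈ L^∞(0,∞)). Suppose that for almost every a > 0 the limit F(a) = lim_{n→∞} f(a n) exists. Then F is equal to a constant almost everywhere. -/

import Mathlib

open Filter Set MeasureTheory

lemma aux_preimage_null {c : ℝ} (hc : c ≠ 0) {N : Set ℝ} (hN : volume N = 0) :
    volume ((fun x => c * x) ⁻¹' N) = 0 := by
  rw [Real.volume_preimage_mul_left hc, hN, mul_zero]

lemma aux_ae_comp_mul {c : ℝ} (hc : c ≠ 0) {P : ℝ → Prop} (h : ∀ᵐ a, P a) :
    ∀ᵐ a, P (c * a) := by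
  rw [ae_iff] at h ⊢
  have : {a : ℝ | ¬ P (c * a)} = (fun x => c * x) ⁻¹' {a | ¬ P a} := rfl
  rw [this]
  exact aux_preimage_null hc h

lemma zero_one (A : Set ℝ) (hA : MeasurableSet A) (hsub : A ⊆ Set.Ioi 0)
    (hinv : ∀ q : ℚ, 0 < q → ∀ᵐ a : ℝ, a ∈ Set.Ioi (0:ℝ) → (a ∈ A ↔ (q:ℝ) * a ∈ A)) :
    volume A = 0 ∨ volume (Set.Ioi (0:ℝ) \ A) = 0 := by
  set κ := volume (A ∩ Set.Ioc (0:ℝ) 1) with hκdef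
  have hκle : κ ≤ 1 := by
    calc κ ≤ volume (Set.Ioc (0:ℝ) 1) := measure_mono inter_subset_right
    _ = 1 := by simp
  have hκfin : κ ≠ ⊤ := (lt_of_le_of_lt hκle ENNReal.one_lt_top).ne
  -- rational scaling
  have hrat : ∀ q : ℚ, 0 < q → volume (A ∩ Set.Ioc 0 (q:ℝ)) = ENNReal.ofReal (q:ℝ) * κ := by
    intro q hq
    have hq0 : (0:ℝ) < (q:ℝ) := by exact_mod_cast hq
    have hNnull : volume {a : ℝ | ¬ (a ∈ Set.Ioi (0:ℝ) → (a ∈ A ↔ (q:ℝ) * a ∈ A))} = 0 :=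
      ae_iff.mp (hinv q hq)
    set S : Set ℝ := (fun x => (q:ℝ) * x) ⁻¹' A ∩ Set.Ioc 0 1 with hSdef
    have hpre : (fun x => (q:ℝ) * x) ⁻¹' (A ∩ Set.Ioc 0 (q:ℝ)) = S := by
      ext x
      simp only [mem_preimage, mem_inter_iff, mem_Ioc, hSdef]
      constructor
      · rintro ⟨hxA, h1, h2⟩
        refine ⟨hxA, ?_, ?_⟩
        · nlinarith
        · nlinarith
      · rintro ⟨hxA, h1, h2⟩
        refine ⟨hxA, ?_, ?_⟩
        · nlinarith
        · nlinarith
    have hSm : volume S = κ := by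
      apply measure_congr
      rw [ae_eq_set]
      constructor
      · apply measure_mono_null _ hNnull
        intro x hx
        obtain ⟨⟨hxA, hx1⟩, hx2⟩ := hx
        intro hcon
        have hxpos : x ∈ Set.Ioi (0:ℝ) := Set.Ioc_subset_Ioi_self hx1
        have := (hcon hxpos).mpr hxA
        exact hx2 ⟨this, hx1⟩
      · apply measure_mono_null _ hNnull
        intro x hx
        obtain ⟨⟨hxA, hx1⟩, hx2⟩ := hx
        intro hcon
        have hxpos : x ∈ Set.Ioi (0:ℝ) := Set.Ioc_subset_Ioi_self hx1
        exact hx2 ⟨(hcon hxpos).mp hxA, hx1⟩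
    have hscale := Real.volume_preimage_mul_left (ne_of_gt hq0) (A ∩ Set.Ioc 0 (q:ℝ))
    rw [hpre, hSm] at hscale
    have : ENNReal.ofReal (q:ℝ) * κ
        = ENNReal.ofReal (q:ℝ) * (ENNReal.ofReal |(q:ℝ)⁻¹| * volume (A ∩ Set.Ioc 0 (q:ℝ))) := by
      rw [hscale]
    rw [this, ← mul_assoc, ← ENNReal.ofReal_mul hq0.le, abs_of_pos (inv_pos.mpr hq0),
      mul_inv_cancel₀ (ne_of_gt hq0), ENNReal.ofReal_one, one_mul]
  -- real scaling by squeeze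
  have hpsi : ∀ x : ℝ, 0 ≤ x → volume (A ∩ Set.Ioc 0 x) = ENNReal.ofReal x * κ := by
    intro x hx
    rcases eq_or_lt_of_le hx with h0 | hx
    · rw [← h0]; simp
    apply le_antisymm
    · apply ENNReal.le_of_forall_pos_le_add
      intro ε hε _
      obtain ⟨q, hq1, hq2⟩ := exists_rat_btwn (lt_add_of_pos_right x (by positivity : (0:ℝ) < ε))
      have hqpos : 0 < q := by have : (0:ℝ) < (q:ℝ) := lt_trans hx hq1; exact_mod_cast this
      calc volume (A ∩ Set.Ioc 0 x) ≤ volume (A ∩ Set.Ioc 0 (q:ℝ)) :=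
            measure_mono (inter_subset_inter_right _ (Set.Ioc_subset_Ioc_right hq1.le))
      _ = ENNReal.ofReal (q:ℝ) * κ := hrat q hqpos
      _ ≤ (ENNReal.ofReal x + ENNReal.ofReal ((q:ℝ) - x)) * κ := by
            apply mul_le_mul_left
            rw [← ENNReal.ofReal_add hx.le (by linarith)]
            apply ENNReal.ofReal_le_ofReal; linarith
      _ = ENNReal.ofReal x * κ + ENNReal.ofReal ((q:ℝ) - x) * κ := by ring
      _ ≤ ENNReal.ofReal x * κ + ENNReal.ofReal ((q:ℝ) - x) * 1 := by
            exact add_le_add_right (mul_le_mul_right hκle _) _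
      _ ≤ ENNReal.ofReal x * κ + ε := by
            rw [mul_one]
            apply add_le_add_right
            rw [← ENNReal.ofReal_coe_nnreal]
            apply ENNReal.ofReal_le_ofReal; linarith
    · apply ENNReal.le_of_forall_pos_le_add
      intro ε hε _
      have hεr : (0:ℝ) < min (ε:ℝ) x := lt_min (by exact_mod_cast hε) hx
      obtain ⟨q, hq1, hq2⟩ := exists_rat_btwn (sub_lt_self x hεr)
      have hqpos : 0 < q := by
        have h1 : (0:ℝ) ≤ x - min (ε:ℝ) x := by linarith [min_le_right (ε:ℝ) x]
        have : (0:ℝ) < (q:ℝ) := lt_of_le_of_lt h1 hq1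
        exact_mod_cast this
      calc ENNReal.ofReal x * κ ≤ (ENNReal.ofReal (q:ℝ) + ENNReal.ofReal (x - (q:ℝ))) * κ := by
            apply mul_le_mul_left
            rw [← ENNReal.ofReal_add (by positivity) (by linarith)]
            apply ENNReal.ofReal_le_ofReal; linarith
      _ = ENNReal.ofReal (q:ℝ) * κ + ENNReal.ofReal (x - (q:ℝ)) * κ := by ring
      _ ≤ volume (A ∩ Set.Ioc 0 x) + ENNReal.ofReal (x - (q:ℝ)) * 1 := by
            apply add_le_add
            · rw [← hrat q hqpos]
              exact measure_mono (inter_subset_inter_right _ (Set.Ioc_subset_Ioc_right hq2.le))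
            · exact mul_le_mul_right hκle _
      _ ≤ volume (A ∩ Set.Ioc 0 x) + ε := by
            rw [mul_one]
            apply add_le_add_right
            rw [← ENNReal.ofReal_coe_nnreal]
            apply ENNReal.ofReal_le_ofReal
            have := min_le_left (ε:ℝ) x; linarith
  have hIoc : ∀ a b : ℝ, 0 ≤ a → volume (A ∩ Set.Ioc a b) = ENNReal.ofReal (b - a) * κ := by
    intro a b ha
    rcases le_or_gt b a with hba | hab
    · rw [Set.Ioc_eq_empty (not_lt.mpr hba), Set.inter_empty, measure_empty,
        ENNReal.ofReal_eq_zero.mpr (by linarith), zero_mul]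
    · have hsplit : A ∩ Set.Ioc 0 b = (A ∩ Set.Ioc 0 a) ∪ (A ∩ Set.Ioc a b) := by
        rw [← Set.inter_union_distrib_left, Set.Ioc_union_Ioc_eq_Ioc ha hab.le]
      have hdis : Disjoint (A ∩ Set.Ioc 0 a) (A ∩ Set.Ioc a b) :=
        Disjoint.mono inter_subset_right inter_subset_right (Set.Ioc_disjoint_Ioc_of_le le_rfl)
      have hmu := measure_union (μ := volume) hdis (hA.inter measurableSet_Ioc)
      rw [← hsplit, hpsi b (le_trans ha hab.le), hpsi a ha] at hmu
      have hofb : ENNReal.ofReal b = ENNReal.ofReal a + ENNReal.ofReal (b - a) := by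
        rw [← ENNReal.ofReal_add ha (by linarith)]; ring_nf
      rw [hofb, add_mul] at hmu
      have hfin : ENNReal.ofReal a * κ ≠ ⊤ := ENNReal.mul_ne_top ENNReal.ofReal_ne_top hκfin
      exact ((ENNReal.add_right_inj hfin).mp hmu).symm
  have : IsLocallyFiniteMeasure (volume.restrict A) :=
    Measure.isLocallyFiniteMeasure_of_le Measure.restrict_le_self
  have hres : volume.restrict A = κ • volume.restrict (Set.Ioi (0:ℝ)) := by
    refine Real.measure_ext_Ioo_rat fun p r => ?_
    have hm0 : (0:ℝ) ≤ max (p:ℝ) 0 := le_max_right _ _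
    have hABa : Set.Ioo (p:ℝ) r ∩ A = (A ∩ Set.Ioc (max (p:ℝ) 0) (r:ℝ)) \ {(r:ℝ)} := by
      ext x
      simp only [mem_inter_iff, mem_Ioo, mem_Ioc, mem_diff, mem_singleton_iff, max_lt_iff]
      constructor
      · rintro ⟨⟨h1, h2⟩, hxA⟩
        exact ⟨⟨hxA, ⟨h1, hsub hxA⟩, h2.le⟩, ne_of_lt h2⟩
      · rintro ⟨⟨hxA, ⟨h1, _⟩, h2⟩, h3⟩
        exact ⟨⟨h1, lt_of_le_of_ne h2 h3⟩, hxA⟩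
    rw [Measure.restrict_apply measurableSet_Ioo, Measure.smul_apply,
      Measure.restrict_apply measurableSet_Ioo, hABa,
      measure_diff_null (measure_singleton _), hIoc _ _ hm0,
      Set.Ioo_inter_Ioi, Real.volume_Ioo, smul_eq_mul, mul_comm]
  have hAc : κ * volume (Set.Ioi (0:ℝ) \ A) = 0 := by
    have h1 : volume.restrict A Aᶜ = 0 := by
      rw [Measure.restrict_apply hA.compl, compl_inter_self, measure_empty]
    rw [hres, Measure.smul_apply, Measure.restrict_apply hA.compl, smul_eq_mul] at h1
    rwa [Set.diff_eq, Set.inter_comm]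
  rcases eq_or_ne κ 0 with hk | hk
  · left
    have h2 : volume A = volume.restrict A Set.univ := by
      rw [Measure.restrict_apply MeasurableSet.univ, Set.univ_inter]
    rw [h2, hres, hk, zero_smul, Measure.coe_zero, Pi.zero_apply]
  · right
    exact (mul_eq_zero.mp hAc).resolve_left hk

theorem stmt_4 (f F : ℝ → ℝ) (M : ℝ) (hmeas : Measurable f)
    (hbound : ∀ x ∈ Set.Ioi (0:ℝ), |f x| ≤ M)
    (hF : ∀ᵐ a ∂(volume.restrict (Set.Ioi (0:ℝ))),
      Tendsto (fun n : ℕ => f (a * n)) atTop (nhds (F a))) :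
    ∃ C : ℝ, ∀ᵐ a ∂(volume.restrict (Set.Ioi (0:ℝ))), F a = C := by
  have hFn : ∀ n : ℕ, AEMeasurable (fun a : ℝ => f (a * n)) (volume.restrict (Set.Ioi (0:ℝ))) :=
    fun n => (hmeas.comp (measurable_mul_const _)).aemeasurable
  have hFae : AEMeasurable F (volume.restrict (Set.Ioi (0:ℝ))) :=
    aemeasurable_of_tendsto_metrizable_ae' hFn hF
  set G : ℝ → ℝ := hFae.mk F with hGdef
  have hGmeas : Measurable G := hFae.measurable_mk
  have hFG : ∀ᵐ a ∂(volume.restrict (Set.Ioi (0:ℝ))), F a = G a := hFae.ae_eq_mk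
  have hTend : ∀ᵐ a : ℝ, a ∈ Set.Ioi (0:ℝ) →
      Tendsto (fun n : ℕ => f (a * n)) atTop (nhds (F a)) :=
    (ae_restrict_iff' measurableSet_Ioi).mp hF
  have hFGv : ∀ᵐ a : ℝ, a ∈ Set.Ioi (0:ℝ) → F a = G a :=
    (ae_restrict_iff' measurableSet_Ioi).mp hFG
  -- invariance of F under rational scaling
  have hinvF : ∀ q : ℚ, 0 < q → ∀ᵐ a : ℝ, a ∈ Set.Ioi (0:ℝ) → F ((q:ℝ) * a) = F a := by
    intro q hq
    have hq0 : (0:ℝ) < (q:ℝ) := by exact_mod_cast hq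
    filter_upwards [hTend, aux_ae_comp_mul (ne_of_gt hq0) hTend] with a h1 h2 ha
    have ha0 : (0:ℝ) < a := ha
    have hqa : (q:ℝ) * a ∈ Set.Ioi (0:ℝ) := mul_pos hq0 ha0
    have h1' := h1 ha
    have h2' := h2 hqa
    set p : ℕ := q.num.toNat with hpdef
    set d : ℕ := q.den with hddef
    have hp : 0 < p := by have := Rat.num_pos.mpr hq; omega
    have hd : 0 < d := q.pos
    have hqd : (q:ℝ) * (d:ℝ) = (p:ℝ) := by
      have hnum : ((p:ℤ):ℝ) = ((q.num:ℤ):ℝ) := by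
        norm_cast
        exact Int.toNat_of_nonneg (Rat.num_pos.mpr hq).le
      have hcast : (q:ℝ) = (q.num:ℝ) / (q.den:ℝ) := by
        rw [Rat.cast_def]
      rw [hcast]
      push_cast at hnum ⊢
      rw [div_mul_cancel₀]
      · exact hnum.symm
      · exact_mod_cast hd.ne'
    have t1 : Tendsto (fun m : ℕ => d * m) atTop atTop :=
      tendsto_atTop_mono (fun m => Nat.le_mul_of_pos_left m hd) tendsto_id
    have t2 : Tendsto (fun m : ℕ => p * m) atTop atTop :=
      tendsto_atTop_mono (fun m => Nat.le_mul_of_pos_left m hp) tendsto_id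
    have e1 := h2'.comp t1
    have e2 := h1'.comp t2
    have heq : ((fun n : ℕ => f (((q:ℝ) * a) * n)) ∘ fun m : ℕ => d * m)
        = ((fun n : ℕ => f (a * n)) ∘ fun m : ℕ => p * m) := by
      funext m
      simp only [Function.comp_apply]
      congr 1
      push_cast
      rw [← hqd]
      ring
    rw [heq] at e1
    exact tendsto_nhds_unique e1 e2
  -- invariance of G
  have hinvG : ∀ q : ℚ, 0 < q → ∀ᵐ a : ℝ, a ∈ Set.Ioi (0:ℝ) → G ((q:ℝ) * a) = G a := by
    intro q hq
    have hq0 : (0:ℝ) < (q:ℝ) := by exact_mod_cast hq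
    filter_upwards [hinvF q hq, hFGv, aux_ae_comp_mul (ne_of_gt hq0) hFGv] with a h1 h2 h3 ha
    have hqa : (q:ℝ) * a ∈ Set.Ioi (0:ℝ) := mul_pos hq0 ha
    rw [← h3 hqa, ← h2 ha, h1 ha]
  -- bound on G
  have hGb : ∀ᵐ a : ℝ, a ∈ Set.Ioi (0:ℝ) → |G a| ≤ M := by
    filter_upwards [hTend, hFGv] with a h1 h2 ha
    rw [← h2 ha]
    have ha0 : (0:ℝ) < a := ha
    apply le_of_tendsto (h1 ha).abs
    filter_upwards [eventually_ge_atTop 1] with n hn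
    have hn0 : (0:ℝ) < (n:ℝ) := by exact_mod_cast hn
    exact hbound _ (mul_pos ha0 hn0)
  -- level sets
  set A : ℝ → Set ℝ := fun c => Set.Ioi 0 ∩ G ⁻¹' Set.Iic c with hAdef
  have hAmeas : ∀ c, MeasurableSet (A c) :=
    fun c => measurableSet_Ioi.inter (hGmeas measurableSet_Iic)
  have hdichot : ∀ c, volume (A c) = 0 ∨ volume (Set.Ioi (0:ℝ) \ A c) = 0 := by
    intro c
    apply zero_one _ (hAmeas c) inter_subset_left
    intro q hq
    have hq0 : (0:ℝ) < (q:ℝ) := by exact_mod_cast hq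
    filter_upwards [hinvG q hq] with a h1 ha
    have hqa : (q:ℝ) * a ∈ Set.Ioi (0:ℝ) := mul_pos hq0 ha
    simp only [hAdef, mem_inter_iff, mem_preimage, mem_Iic]
    constructor
    · rintro ⟨_, h⟩; exact ⟨hqa, by rwa [h1 ha]⟩
    · rintro ⟨_, h⟩; exact ⟨ha, by rwa [← h1 ha]⟩
  set S : Set ℝ := {c | volume (Set.Ioi (0:ℝ) \ A c) = 0} with hSdef
  have hGbnull : volume {a : ℝ | ¬ (a ∈ Set.Ioi (0:ℝ) → |G a| ≤ M)} = 0 := ae_iff.mp hGb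
  have hMS : M ∈ S := by
    apply measure_mono_null _ hGbnull
    rintro a ⟨ha, hna⟩
    intro hcon
    exact hna ⟨ha, le_trans (le_abs_self _) (hcon ha)⟩
  have hSlb : ∀ c ∈ S, -|M| - 1 ≤ c := by
    intro c hc
    by_contra hlt
    push_neg at hlt
    have hAnull : volume (A c) = 0 := by
      apply measure_mono_null _ hGbnull
      rintro a ⟨ha, hGa⟩
      intro hcon
      have h1 : |G a| ≤ M := hcon ha
      have h2 : G a ≤ c := hGa
      have h3 := neg_abs_le (G a)
      have h4 := le_abs_self M
      linarith
    have hcover : volume (Set.Ioi (0:ℝ)) ≤ volume (A c) + volume (Set.Ioi (0:ℝ) \ A c) := by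
      calc volume (Set.Ioi (0:ℝ)) ≤ volume (A c ∪ (Set.Ioi (0:ℝ) \ A c)) := by
            apply measure_mono
            intro x hx
            by_cases h : x ∈ A c
            · exact Or.inl h
            · exact Or.inr ⟨hx, h⟩
      _ ≤ volume (A c) + volume (Set.Ioi (0:ℝ) \ A c) := measure_union_le _ _
    rw [hAnull, hc, add_zero] at hcover
    simp [Real.volume_Ioi] at hcover
  have hSbdd : BddBelow S := ⟨-|M| - 1, hSlb⟩
  have hSne : S.Nonempty := ⟨M, hMS⟩
  refine ⟨sInf S, ?_⟩
  set C := sInf S with hCdef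
  have hup : ∀ c : ℝ, C < c → volume (Set.Ioi (0:ℝ) \ A c) = 0 := by
    intro c hc
    obtain ⟨c', hc'S, hc'⟩ := exists_lt_of_csInf_lt hSne hc
    apply measure_mono_null _ hc'S
    rintro a ⟨ha, hna⟩
    exact ⟨ha, fun h => hna ⟨h.1, le_trans h.2 hc'.le⟩⟩
  have hdown : ∀ c : ℝ, c < C → volume (A c) = 0 := by
    intro c hc
    rcases hdichot c with h | h
    · exact h
    · exact absurd (csInf_le hSbdd h) (not_le.mpr hc)
  rw [ae_restrict_iff' measurableSet_Ioi, ae_iff]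
  have hbad : volume ({a : ℝ | ¬ (a ∈ Set.Ioi (0:ℝ) → F a = G a)}
      ∪ ((⋃ n : ℕ, (Set.Ioi (0:ℝ) \ A (C + 1/((n:ℝ)+1))))
        ∪ ⋃ n : ℕ, A (C - 1/((n:ℝ)+1)))) = 0 := by
    apply measure_union_null (ae_iff.mp hFGv)
    apply measure_union_null <;> apply measure_iUnion_null <;> intro n
    · apply hup
      have : (0:ℝ) < 1/((n:ℝ)+1) := by positivity
      linarith
    · apply hdown
      have : (0:ℝ) < 1/((n:ℝ)+1) := by positivity
      linarith
  apply measure_mono_null _ hbad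
  intro a ha
  rw [mem_setOf_eq, Classical.not_imp] at ha
  obtain ⟨ha0, hFC⟩ := ha
  by_cases hFGa : F a = G a
  · have hGC : G a ≠ C := fun h => hFC (hFGa.trans h)
    rcases lt_or_gt_of_ne hGC with h | h
    · obtain ⟨n, hn⟩ := exists_nat_one_div_lt (sub_pos.2 h)
      refine Or.inr (Or.inr (mem_iUnion.mpr ⟨n, ha0, ?_⟩))
      simp only [mem_preimage, mem_Iic]
      linarith
    · obtain ⟨n, hn⟩ := exists_nat_one_div_lt (sub_pos.2 h)
      refine Or.inr (Or.inl (mem_iUnion.mpr ⟨n, ha0, fun hAc => ?_⟩))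
      have h2 : G a ≤ C + 1/((n:ℝ)+1) := hAc.2
      linarith
  · exact Or.inl (fun hcon => hFGa (hcon ha0))
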